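/- The value of a read-once expression tree depends on each of its leaf variables: for every read-once expression tree T over Fin n and every variable v labeling a leaf of T, val T does not lie in the subfield of K generated over ℚ by the images of the variables other than v. Consequently, if two read-once expression trees T1 and T2 satisfy val T1 = val T2, then the set of variables labeling the leaves of T1 equals the set of variables labeling the leaves of T2. -/

import Mathlib

/-- The four binary arithmetic operations labeling internal nodes. -/
inductive Op : Type
  | add | sub | mul | div
deriving DecidableEq, Repr

/-- An expression tree over variables `Fin n`: a full binary tree whose leaves
are labeled by variables and whose internal nodes carry an operation. -/
inductive ETree (n : ℕ) : Type
  | leaf (v : Fin n)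
  | node (op : Op) (l r : ETree n)
deriving DecidableEq

/-- The field of rational functions in `n` variables over `ℚ`. -/
abbrev K (n : ℕ) := FractionRing (MvPolynomial (Fin n) ℚ)

/-- The list of variables labeling the leaves, from left to right. -/
def leafList {n : ℕ} : ETree n → List (Fin n)
  | .leaf v => [v]
  | .node _ l r => leafList l ++ leafList r

/-- A tree is read-once (a *valid* expression) if each variable labels at most one leaf. -/
def ReadOnce {n : ℕ} (T : ETree n) : Prop := (leafList T).Nodup

/-- The set of variables labeling leaves of a tree. -/
def leafVars {n : ℕ} (T : ETree n) : Finset (Fin n) := (leafList T).toFinset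

/-- The value of an expression tree in the field of rational functions. -/
noncomputable def val {n : ℕ} : ETree n → K n
  | .leaf v => algebraMap (MvPolynomial (Fin n) ℚ) (K n) (MvPolynomial.X v)
  | .node .add l r => val l + val r
  | .node .sub l r => val l - val r
  | .node .mul l r => val l * val r
  | .node .div l r => val l / val r

namespace ValDepAux

open MvPolynomial

variable {n : ℕ}

/-- The subfield generated over `ℚ` by the variables other than `v`. -/
noncomputable def D (n : ℕ) (v : Fin n) : Subfield (K n) :=
  Subfield.closure
    (Set.range (algebraMap ℚ (K n)) ∪
      {x : K n | ∃ u : Fin n, u ≠ v ∧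
        x = algebraMap (MvPolynomial (Fin n) ℚ) (K n) (MvPolynomial.X u)})

noncomputable def f (v : Fin n) : Fin n → MvPolynomial (Fin n) ℚ :=
  fun u => if u = v then -X v else X u

lemma aeval_invol (v : Fin n) (p : MvPolynomial (Fin n) ℚ) :
    aeval (f v) (aeval (f v) p) = p := by
  have h : (aeval (f v)).comp (aeval (f v)) =
      AlgHom.id ℚ (MvPolynomial (Fin n) ℚ) := by
    apply MvPolynomial.algHom_ext
    intro u
    simp only [AlgHom.comp_apply, aeval_X, AlgHom.id_apply, f]
    by_cases hu : u = v
    · subst hu; simp [f]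
    · simp [f, hu]
  calc aeval (f v) (aeval (f v) p)
      = ((aeval (f v)).comp (aeval (f v))) p := rfl
    _ = p := by rw [h]; rfl

lemma g_inj (v : Fin n) :
    Function.Injective
      ((algebraMap (MvPolynomial (Fin n) ℚ) (K n)).comp
        ((aeval (f v) : MvPolynomial (Fin n) ℚ →ₐ[ℚ] MvPolynomial (Fin n) ℚ)
          : MvPolynomial (Fin n) ℚ →+* MvPolynomial (Fin n) ℚ)) := by
  apply (IsFractionRing.injective (MvPolynomial (Fin n) ℚ) (K n)).comp
  intro p q h
  change aeval (f v) p = aeval (f v) q at h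
  have := congrArg (aeval (f v)) h
  rwa [aeval_invol, aeval_invol] at this

/-- The automorphism of `K n` sending `X v ↦ -X v` and fixing the other variables. -/
noncomputable def σ (v : Fin n) : K n →+* K n :=
  IsFractionRing.lift (g_inj v)

lemma σ_X (v u : Fin n) :
    σ v (algebraMap (MvPolynomial (Fin n) ℚ) (K n) (X u)) =
      algebraMap (MvPolynomial (Fin n) ℚ) (K n) (f v u) := by
  unfold σ
  rw [IsFractionRing.lift_algebraMap]
  simp [f]

lemma X_notmem_D (v : Fin n) :
    algebraMap (MvPolynomial (Fin n) ℚ) (K n) (X v) ∉ D n v := by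
  intro h
  have hfix : Set.EqOn (σ v) (RingHom.id (K n))
      (Set.range (algebraMap ℚ (K n)) ∪
        {x : K n | ∃ u : Fin n, u ≠ v ∧
          x = algebraMap (MvPolynomial (Fin n) ℚ) (K n) (MvPolynomial.X u)}) := by
    rintro x (⟨q, rfl⟩ | ⟨u, hu, rfl⟩)
    · have h1 : algebraMap ℚ (K n) q = (q : K n) := eq_ratCast _ q
      simp only [RingHom.id_apply, h1, map_ratCast]
    · simp only [RingHom.id_apply, σ_X, f, if_neg hu]
  have := RingHom.eqOn_field_closure hfix h
  rw [RingHom.id_apply, σ_X, show f v v = -X v by simp [f], map_neg] at this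
  have hX : algebraMap (MvPolynomial (Fin n) ℚ) (K n) (X v) ≠ 0 := by
    rw [Ne, map_eq_zero_iff _ (IsFractionRing.injective _ _)]
    exact X_ne_zero v
  exact hX (by linear_combination -(this : _) / 2)

lemma mem_D_of_avoids (v : Fin n) :
    ∀ T : ETree n, (∀ u ∈ leafList T, u ≠ v) → val T ∈ D n v := by
  intro T
  induction T with
  | leaf u =>
      intro h
      exact Subfield.subset_closure (Or.inr ⟨u, h u (by simp [leafList]), rfl⟩)
  | node op l r ihl ihr =>
      intro h
      have hl := ihl fun u hu => h u (by simp [leafList, hu])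
      have hr := ihr fun u hu => h u (by simp [leafList, hu])
      cases op with
      | add => exact add_mem hl hr
      | sub => exact sub_mem hl hr
      | mul => exact mul_mem hl hr
      | div => exact div_mem hl hr

lemma exists_leaf (T : ETree n) : ∃ w, w ∈ leafList T := by
  induction T with
  | leaf v => exact ⟨v, by simp [leafList]⟩
  | node op l r ihl ihr =>
      obtain ⟨w, hw⟩ := ihl
      exact ⟨w, by simp [leafList, hw]⟩

lemma main (T : ETree n) (hT : ReadOnce T) :
    ∀ v ∈ leafVars T, val T ∉ D n v := by
  induction T with
  | leaf w =>
      intro v hv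
      have : v = w := by simpa [leafVars, leafList] using hv
      subst this
      exact X_notmem_D v
  | node op l r ihl ihr =>
      intro v hv
      rw [ReadOnce, leafList, List.nodup_append] at hT
      obtain ⟨hl, hr, hdisj⟩ := hT
      -- values of subtrees are nonzero
      have hlne : val l ≠ 0 := by
        obtain ⟨w, hw⟩ := exists_leaf l
        intro h0
        exact ihl hl w (by simp [leafVars, hw]) (h0 ▸ Subfield.zero_mem _)
      have hrne : val r ≠ 0 := by
        obtain ⟨w, hw⟩ := exists_leaf r
        intro h0
        exact ihr hr w (by simp [leafVars, hw]) (h0 ▸ Subfield.zero_mem _)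
      have hv' : v ∈ leafList l ∨ v ∈ leafList r := by
        simpa [leafVars, leafList] using hv
      rcases hv' with hvl | hvr
      · -- v in left subtree
        have ha : val l ∉ D n v := ihl hl v (by simp [leafVars, hvl])
        have hb : val r ∈ D n v :=
          mem_D_of_avoids v r fun u hu hvu => hdisj v hvl u hu hvu.symm
        cases op with
        | add =>
            intro h
            have h' : val l + val r ∈ D n v := h
            exact ha (by simpa using sub_mem h' hb)
        | sub =>
            intro h
            have h' : val l - val r ∈ D n v := h
            exact ha (by simpa using add_mem h' hb)
        | mul =>
            intro h
            have h' : val l * val r ∈ D n v := h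
            have : val l * val r / val r ∈ D n v := div_mem h' hb
            rw [mul_div_cancel_right₀ _ hrne] at this
            exact ha this
        | div =>
            intro h
            have h' : val l / val r ∈ D n v := h
            have : val l / val r * val r ∈ D n v := mul_mem h' hb
            rw [div_mul_cancel₀ _ hrne] at this
            exact ha this
      · -- v in right subtree
        have ha : val l ∈ D n v :=
          mem_D_of_avoids v l fun u hu hvu => hdisj u hu v hvr hvu
        have hb : val r ∉ D n v := ihr hr v (by simp [leafVars, hvr])
        cases op with
        | add =>
            intro h
            have h' : val l + val r ∈ D n v := h
            exact hb (by simpa using sub_mem h' ha)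
        | sub =>
            intro h
            have h' : val l - val r ∈ D n v := h
            have : val l - (val l - val r) ∈ D n v := sub_mem ha h'
            rw [sub_sub_cancel] at this
            exact hb this
        | mul =>
            intro h
            have h' : val l * val r ∈ D n v := h
            have : val l * val r / val l ∈ D n v := div_mem h' ha
            rw [mul_div_cancel_left₀ _ hlne] at this
            exact hb this
        | div =>
            intro h
            have h' : val l / val r ∈ D n v := h
            have heq : val l / (val l / val r) = val r := by
              field_simp
            have : val l / (val l / val r) ∈ D n v := div_mem ha h'
            rw [heq] at this
            exact hb this

theorem final (n : ℕ) :
    (∀ T : ETree n, ReadOnce T → ∀ v ∈ leafVars T,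
      val T ∉ Subfield.closure
        (Set.range (algebraMap ℚ (K n)) ∪
          {x : K n | ∃ u : Fin n, u ≠ v ∧
            x = algebraMap (MvPolynomial (Fin n) ℚ) (K n) (MvPolynomial.X u)})) ∧
    (∀ T1 T2 : ETree n, ReadOnce T1 → ReadOnce T2 → val T1 = val T2 →
      leafVars T1 = leafVars T2) := by
  constructor
  · exact fun T hT v hv => main T hT v hv
  · intro T1 T2 h1 h2 hval
    by_contra hne
    have key : ∀ (S1 S2 : ETree n), ReadOnce S1 → val S1 = val S2 →
        ∀ v ∈ leafVars S1, v ∈ leafVars S2 := by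
      intro S1 S2 hS1 hv v hvmem
      by_contra hnot
      have hmem : val S2 ∈ D n v := by
        apply mem_D_of_avoids
        intro u hu huv
        exact hnot (by simp [leafVars, huv ▸ hu])
      exact main S1 hS1 v hvmem (hv ▸ hmem)
    apply hne
    apply Finset.Subset.antisymm
    · exact fun v hv => key T1 T2 h1 hval v hv
    · exact fun v hv => key T2 T1 h2 hval.symm v hv

end ValDepAux

/-- The value of a read-once expression tree depends on each of its leaf variables:
it lies outside the subfield of `K n` generated over `ℚ` by the images of the other
variables.  Consequently, read-once trees with equal values have equal leaf-variable sets. -/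
theorem val_depends_on_every_leaf_var (n : ℕ) :
    (∀ T : ETree n, ReadOnce T → ∀ v ∈ leafVars T,
      val T ∉ Subfield.closure
        (Set.range (algebraMap ℚ (K n)) ∪
          {x : K n | ∃ u : Fin n, u ≠ v ∧
            x = algebraMap (MvPolynomial (Fin n) ℚ) (K n) (MvPolynomial.X u)})) ∧
    (∀ T1 T2 : ETree n, ReadOnce T1 → ReadOnce T2 → val T1 = val T2 →
      leafVars T1 = leafVars T2) := ValDepAux.final n
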